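/- arXiv:2403.03320 — 2 statements merged into one kernel-verified Lean document; each statement's English description precedes it below -/
import Mathlib

section
/- The Zernike polynomials ψ_{j,k}(r,θ) = sqrt((|j|+2k+1)/π) · R^{|j|}_{|j|+2k}(r) · e^{i j θ}, for j ∈ ℤ and k ∈ ℕ, form an orthonormal family in L²(D) on the unit disk D ⊂ ℝ², where the inner product is ∫_0^1 ∫_0^{2π} ψ_{j,k} conj(ψ_{j',k'}) r dθ dr. That is, ⟨ψ_{j,k}, ψ_{j',k'}⟩ = 1 if (j,k) = (j',k') and 0 otherwise. -/
open Complex Real MeasureTheory ComplexConjugate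

/-- The Zernike radial function `R^{j}_{j+2k}`. -/
noncomputable def zernikeR (j k : ℕ) (r : ℝ) : ℝ :=
  ∑ i ∈ Finset.range (k + 1),
    (-1 : ℝ) ^ i * (Nat.choose (j + 2 * k - i) i) *
      (Nat.choose (j + 2 * k - 2 * i) (k - i)) * r ^ (j + 2 * k - 2 * i)

/-- The Zernike polynomial `ψ_{j,k}` in polar coordinates. -/
noncomputable def zernikePsi (j : ℤ) (k : ℕ) (r θ : ℝ) : ℂ :=
  (Real.sqrt ((j.natAbs + 2 * k + 1) / π) : ℝ) * (zernikeR j.natAbs k r : ℝ) *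
    Complex.exp (Complex.I * j * θ)

open Finset Polynomial

lemma fd_sub (f g : ℝ → ℝ) : fwdDiff (1:ℝ) (f - g) = fwdDiff (1:ℝ) f - fwdDiff (1:ℝ) g := by
  funext x; simp [fwdDiff]; ring

lemma fd_iter_sub (f g : ℝ → ℝ) (n : ℕ) :
    (fwdDiff (1:ℝ))^[n] (f - g) = (fwdDiff (1:ℝ))^[n] f - (fwdDiff (1:ℝ))^[n] g := by
  induction n generalizing f g with
  | zero => simp
  | succ n ih => simp [Function.iterate_succ_apply, fd_sub, ih]

lemma fd_eval (P : Polynomial ℝ) :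
    fwdDiff (1:ℝ) (fun x => P.eval x) = fun x => (P.comp (X + C 1) - P).eval x := by
  funext x; simp [fwdDiff, eval_comp]

lemma fd_poly (k : ℕ) (P : Polynomial ℝ) (h : P.degree < k) :
    (fwdDiff (1:ℝ))^[k] (fun x => P.eval x) = fun _ => 0 := by
  induction k generalizing P with
  | zero =>
    have hP : P = 0 := by
      by_cases h0 : P = 0
      · exact h0
      · exfalso
        rw [P.degree_eq_natDegree h0] at h
        exact absurd h (by exact_mod_cast Nat.not_lt_zero _)
    simp [hP]
  | succ k ih =>
    rw [Function.iterate_succ_apply, fd_eval]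
    apply ih
    by_cases h0 : P = 0
    · simp only [h0, zero_comp, sub_zero, degree_zero]
      exact WithBot.bot_lt_coe _
    · have hc0 : P.comp (X + C 1) ≠ 0 := comp_X_add_C_ne_zero_iff.mpr h0
      have hcomp : (P.comp (X + C 1)).degree = P.degree := by
        rw [P.degree_eq_natDegree h0, degree_eq_natDegree hc0, natDegree_comp,
          natDegree_X_add_C, mul_one]
      have hlc : (P.comp (X + C 1)).leadingCoeff = P.leadingCoeff := by
        rw [leadingCoeff_comp (by rw [natDegree_X_add_C]; norm_num)]
        rw [leadingCoeff_X_add_C, one_pow, mul_one]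
      have hlt : (P.comp (X + C 1) - P).degree < P.degree := by
        have := degree_sub_lt hcomp hc0 hlc
        rwa [hcomp] at this
      have hPk : P.degree ≤ (k : WithBot ℕ) := by
        rw [P.degree_eq_natDegree h0] at h ⊢
        exact_mod_cast Nat.lt_succ_iff.mp (by exact_mod_cast h)
      exact lt_of_lt_of_le hlt hPk

lemma fd_inv (k : ℕ) : ∀ (c : ℝ), 0 < c →
    (fwdDiff (1:ℝ))^[k] (fun x => 1/(x+c)) 0 =
      (-1)^k * k.factorial / ∏ t ∈ range (k+1), (c+t) := by
  induction k with
  | zero => intro c hc; simp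
  | succ k ih =>
    intro c hc
    have hstep : fwdDiff (1:ℝ) (fun x => 1/(x+c)) =
        (fun x => 1/(x+(c+1))) - (fun x => 1/(x+c)) := by
      funext x; simp only [fwdDiff, Pi.sub_apply]; ring_nf
    rw [Function.iterate_succ_apply, hstep, fd_iter_sub, Pi.sub_apply,
      ih (c+1) (by linarith), ih c hc]
    have hApos : (0:ℝ) < ∏ t ∈ range (k+1), (c+t) :=
      prod_pos fun t _ => by positivity
    have hBpos : (0:ℝ) < ∏ t ∈ range (k+1), (c+1+t) :=
      prod_pos fun t _ => by positivity
    set A := ∏ t ∈ range (k+1), (c+t) with hA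
    set B := ∏ t ∈ range (k+1), (c+1+t) with hB
    have hprod : ∏ t ∈ range (k+2), (c+t) = c * B := by
      rw [prod_range_succ' (fun t : ℕ => c + (t:ℝ)) (k+1)]
      push_cast
      rw [add_zero, mul_comm]
      congr 1
      exact prod_congr rfl fun t _ => by ring
    have hrel : A * (c+k+1) = c * B := by
      have h1 : A * (c + (((k+1):ℕ):ℝ)) = ∏ t ∈ range (k+2), (c+t) :=
        (prod_range_succ (fun t : ℕ => c + (t:ℝ)) (k+1)).symm
      rw [hprod] at h1
      push_cast at h1
      linarith [h1]
    rw [hprod]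
    have hc' : c ≠ 0 := ne_of_gt hc
    have hA' : A ≠ 0 := ne_of_gt hApos
    have hB' : B ≠ 0 := ne_of_gt hBpos
    field_simp
    push_cast [Nat.factorial_succ]
    linear_combination ((k.factorial:ℝ) * (-1)^k) * hrel

lemma sum_eq_fd (k : ℕ) (f : ℝ → ℝ) :
    ∑ j ∈ range (k+1), (-1:ℝ)^(k-j) * (k.choose j) * f j = (fwdDiff (1:ℝ))^[k] f 0 := by
  rw [fwdDiff_iter_eq_sum_shift]
  refine sum_congr rfl fun j hj => ?_
  rw [zsmul_eq_mul]
  push_cast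
  norm_num

lemma asc_fact (m n : ℕ) : (m + n).factorial = m.factorial * ∏ t ∈ range n, (m+1+t) := by
  induction n with
  | zero => simp
  | succ n ih =>
    rw [prod_range_succ, ← mul_assoc, ← ih, ← add_assoc, Nat.factorial_succ]
    ring

lemma prod_cast_asc (m k j : ℕ) :
    ∏ t ∈ range k, ((j:ℝ) + ((m:ℝ)+1+t)) = (m+k+j).factorial / (m+j).factorial := by
  rw [eq_div_iff (by exact_mod_cast (m+j).factorial_ne_zero)]
  have h := asc_fact (m+j) k
  have h2 : ∏ t ∈ range k, ((j:ℝ) + ((m:ℝ)+1+t)) = ((∏ t ∈ range k, (m+j+1+t) : ℕ) : ℝ) := by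
    push_cast
    exact prod_congr rfl fun t _ => by ring
  rw [h2, show m+k+j = m+j+k by ring, h]
  push_cast
  ring

lemma prod_sub_nat (k : ℕ) : ∏ t ∈ range k, (k - t) = k.factorial := by
  induction k with
  | zero => simp
  | succ k ih =>
    rw [prod_range_succ' (fun t => k+1-t) k]
    simp only [Nat.succ_sub_succ, Nat.sub_zero, ih, Nat.factorial_succ]
    ring

lemma prod_sub_real (k : ℕ) : ∏ t ∈ range k, ((t:ℝ) - k) = (-1)^k * k.factorial := by
  have h1 : ∀ t ∈ range k, (t:ℝ) - k = (-1) * (((k-t : ℕ)):ℝ) := by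
    intro t ht
    rw [Nat.cast_sub (le_of_lt (mem_range.mp ht))]
    ring
  rw [prod_congr rfl h1, prod_mul_distrib, prod_const, card_range, ← Nat.cast_prod,
    prod_sub_nat]

/-- Key lemma, diagonal case. -/
lemma KLk (m k : ℕ) :
    ∑ j ∈ range (k+1), (-1:ℝ)^(k-j) * (k.choose j) *
      ((m+k+j).factorial / ((m+j).factorial * ((m:ℝ)+j+k+1)))
    = (k.factorial:ℝ)^2 * (m+k).factorial / (m+2*k+1).factorial := by
  set c : ℝ := (m:ℝ) + k + 1 with hc
  set Q : Polynomial ℝ := (∏ t ∈ range k, (X + C ((m:ℝ)+1+t))) - C ((-1:ℝ)^k * (k.factorial:ℝ))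
    with hQ
  have hroot : Q.IsRoot (-c) := by
    simp only [hQ, IsRoot, eval_sub, eval_prod, eval_add, eval_X, eval_C]
    have h1 : ∀ t ∈ range k, -c + ((m:ℝ)+1+t) = (t:ℝ) - k := fun t _ => by rw [hc]; ring
    rw [prod_congr rfl h1, prod_sub_real, sub_self]
  obtain ⟨P₁, hP₁⟩ : (X - C (-c)) ∣ Q := dvd_iff_isRoot.mpr hroot
  have hdegP₁ : P₁.degree < (k : WithBot ℕ) := by
    by_cases h0 : P₁ = 0
    · rw [h0, degree_zero]; exact WithBot.bot_lt_coe _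
    · have hQdeg : Q.natDegree ≤ k := by
        refine le_trans (natDegree_sub_le _ _) ?_
        simp only [natDegree_C, max_le_iff]
        constructor
        · rw [natDegree_prod _ _ fun t _ _h => (monic_X_add_C _).ne_zero _h]
          simp only [natDegree_X_add_C, sum_const, smul_eq_mul, mul_one, card_range, le_refl]
        · omega
      have h2 : Q.natDegree = 1 + P₁.natDegree := by
        rw [hP₁, natDegree_mul (X_sub_C_ne_zero _) h0, natDegree_X_sub_C]
      have h3 : P₁.natDegree < k := by omega
      exact lt_of_le_of_lt (degree_le_natDegree) (by exact_mod_cast h3)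
  have hterm : ∀ j : ℕ, ((m+k+j).factorial / ((m+j).factorial * ((m:ℝ)+j+k+1)))
      = P₁.eval (j:ℝ) + ((-1:ℝ)^k * k.factorial) * (1 / ((j:ℝ) + c)) := by
    intro j
    have heval : Q.eval (j:ℝ) = ((j:ℝ) + c) * P₁.eval (j:ℝ) := by
      rw [hP₁]
      simp only [eval_mul, eval_sub, eval_X, eval_C]
      ring
    have hQev : Q.eval (j:ℝ) = (m+k+j).factorial / (m+j).factorial - (-1:ℝ)^k * k.factorial := by
      simp only [hQ, eval_sub, eval_prod, eval_add, eval_X, eval_C]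
      rw [prod_cast_asc]
    have hne : ((m+j).factorial : ℝ) ≠ 0 := by exact_mod_cast (m+j).factorial_ne_zero
    have hcpos : (0:ℝ) < (j:ℝ) + c := by rw [hc]; positivity
    rw [hQev] at heval
    have hd : ((m:ℝ)+j+k+1) = (j:ℝ) + c := by rw [hc]; ring
    have hc0 : (j:ℝ) + c ≠ 0 := ne_of_gt hcpos
    rw [hd]
    field_simp at heval ⊢
    linear_combination heval
  have hsum : ∑ j ∈ range (k+1), (-1:ℝ)^(k-j) * (k.choose j) *
      ((m+k+j).factorial / ((m+j).factorial * ((m:ℝ)+j+k+1)))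
      = (fwdDiff (1:ℝ))^[k]
          ((fun x => P₁.eval x) + (((-1:ℝ)^k * (k.factorial:ℝ)) • (fun x => 1/(x + c)))) 0 := by
    rw [← sum_eq_fd]
    refine sum_congr rfl fun j _ => ?_
    rw [hterm j]
    simp only [Pi.add_apply, Pi.smul_apply, smul_eq_mul]
  rw [hsum, fwdDiff_iter_add, Pi.add_apply, fwdDiff_iter_const_smul, fd_poly k P₁ hdegP₁,
    Pi.smul_apply, smul_eq_mul, fd_inv k c (by rw [hc]; positivity)]
  have h3 := prod_cast_asc (m+k) (k+1) 0
  simp only [add_zero] at h3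
  push_cast at h3
  have hprod : ∏ t ∈ range (k+1), (c + (t:ℝ)) = ((m+k+(k+1)).factorial : ℝ) / (m+k).factorial := by
    rw [← h3]
    exact prod_congr rfl fun t _ => by rw [hc]; ring
  rw [show m+2*k+1 = m+k+(k+1) by ring, hprod]
  have hfne : ((m+k).factorial : ℝ) ≠ 0 := by exact_mod_cast (m+k).factorial_ne_zero
  have hf2 : ((m+2*k+1).factorial : ℝ) ≠ 0 := by exact_mod_cast (m+2*k+1).factorial_ne_zero
  simp only [Pi.zero_apply, zero_add]
  field_simp
  ring_nf
  have hsq : (-1:ℝ)^(k*2) = 1 := by rw [mul_comm, pow_mul]; norm_num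
  rw [hsq]

/-- Key lemma : alternating binomial sum of factorial ratios. -/
lemma KL (m k j' : ℕ) (h : j' ≤ k) :
    ∑ j ∈ range (k+1), (-1:ℝ)^(k-j) * (k.choose j) *
      ((m+k+j).factorial / ((m+j).factorial * ((m:ℝ)+j+j'+1)))
    = if j' = k then (k.factorial:ℝ)^2 * (m+k).factorial / (m+2*k+1).factorial else 0 := by
  rcases lt_or_eq_of_le h with hjk | heq
  · rw [if_neg (Nat.ne_of_lt hjk)]
    have hmem : j' ∈ range k := mem_range.mpr hjk
    set P : Polynomial ℝ := ∏ t ∈ (range k).erase j', (X + C ((m:ℝ)+1+t)) with hP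
    have hterm : ∀ j : ℕ, ((m+k+j).factorial / ((m+j).factorial * ((m:ℝ)+j+j'+1)))
        = P.eval (j:ℝ) := by
      intro j
      have h1 : ((j:ℝ) + ((m:ℝ)+1+j')) * P.eval (j:ℝ) = ∏ t ∈ range k, ((j:ℝ) + ((m:ℝ)+1+t)) := by
        rw [hP, eval_prod]
        simp only [eval_add, eval_X, eval_C]
        exact mul_prod_erase (range k) (fun t : ℕ => (j:ℝ) + ((m:ℝ)+1+t)) hmem
      rw [prod_cast_asc] at h1
      rw [div_eq_iff (by positivity)]
      have hne : ((m+j).factorial : ℝ) ≠ 0 := by exact_mod_cast (m+j).factorial_ne_zero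
      field_simp at h1
      linear_combination -h1
    have hrw : ∑ j ∈ range (k+1), (-1:ℝ)^(k-j) * (k.choose j) *
        ((m+k+j).factorial / ((m+j).factorial * ((m:ℝ)+j+j'+1)))
        = ∑ j ∈ range (k+1), (-1:ℝ)^(k-j) * (k.choose j) * P.eval ((j:ℕ):ℝ) :=
      sum_congr rfl fun j _ => by rw [hterm j]
    have hfd := sum_eq_fd k (fun x => P.eval x)
    rw [hrw, hfd, fd_poly k P]
    have hmonic : P.Monic := monic_prod_of_monic _ _ fun t _ => monic_X_add_C _
    have hdeg : P.natDegree = k - 1 := by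
      rw [hP, natDegree_prod _ _ fun t _ _h => (monic_X_add_C _).ne_zero _h]
      simp only [natDegree_X_add_C, sum_const, smul_eq_mul, mul_one,
        card_erase_of_mem hmem, card_range]
    rw [degree_eq_natDegree hmonic.ne_zero, hdeg]
    exact_mod_cast Nat.sub_lt (by omega) one_pos
  · subst heq
    rw [if_pos rfl]
    exact KLk m j'

lemma choose_identity (m k j : ℕ) (hj : j ≤ k) :
    (((m+k+j).choose (k-j) : ℝ)) * (((m+2*j).choose j : ℝ)) =
      (k.choose j) * (m+k+j).factorial / (k.factorial * (m+j).factorial) := by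
  rw [Nat.cast_choose ℝ (show k-j ≤ m+k+j by omega),
    Nat.cast_choose ℝ (show j ≤ m+2*j by omega),
    Nat.cast_choose ℝ hj,
    show m+k+j-(k-j) = m+2*j by omega, show m+2*j-j = m+j by omega]
  have h1 : ((k-j).factorial : ℝ) ≠ 0 := by exact_mod_cast (k-j).factorial_ne_zero
  have h2 : ((m+2*j).factorial : ℝ) ≠ 0 := by exact_mod_cast (m+2*j).factorial_ne_zero
  have h3 : (j.factorial : ℝ) ≠ 0 := by exact_mod_cast j.factorial_ne_zero
  have h4 : ((m+j).factorial : ℝ) ≠ 0 := by exact_mod_cast (m+j).factorial_ne_zero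
  have h5 : (k.factorial : ℝ) ≠ 0 := by exact_mod_cast k.factorial_ne_zero
  field_simp

lemma neg_one_pow_sub (k j : ℕ) (h : j ≤ k) : (-1:ℝ)^(k-j) = (-1)^k * (-1)^j := by
  have h1 : (-1:ℝ)^(k-j) * (-1)^j = (-1)^k := by
    rw [← pow_add, Nat.sub_add_cancel h]
  have h2 : ((-1:ℝ)^j) * ((-1)^j) = 1 := by
    rw [← pow_add, ← two_mul]
    exact Even.neg_one_pow ⟨j, two_mul j ▸ rfl⟩
  calc (-1:ℝ)^(k-j) = (-1:ℝ)^(k-j) * (((-1:ℝ)^j) * ((-1)^j)) := by rw [h2, mul_one]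
    _ = (-1)^k * (-1)^j := by rw [← mul_assoc, h1]

lemma reflect_sum (k : ℕ) (f : ℕ → ℝ) :
    ∑ i ∈ range (k+1), f i = ∑ j ∈ range (k+1), f (k - j) := by
  conv_lhs => rw [← Finset.sum_range_reflect]
  exact sum_congr rfl fun j _ => by rw [Nat.add_sub_cancel]

/-- The radial orthogonality double sum, assuming `k' ≤ k`. -/
lemma radial_sum_aux (m k k' : ℕ) (hkk : k' ≤ k) :
    ∑ i ∈ range (k+1), ∑ i' ∈ range (k'+1),
      ((-1:ℝ)^i * ((m+2*k-i).choose i) * ((m+2*k-2*i).choose (k-i))) *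
      ((-1:ℝ)^i' * ((m+2*k'-i').choose i') * ((m+2*k'-2*i').choose (k'-i'))) *
      (1 / ((((m+2*k-2*i) + (m+2*k'-2*i') + 1 : ℕ):ℝ) + 1))
    = if k = k' then 1/(2*((m:ℝ)+2*k+1)) else 0 := by
  rw [reflect_sum]
  have hstep : ∀ j ∈ range (k+1),
      (∑ i' ∈ range (k'+1),
        ((-1:ℝ)^(k-j) * ((m+2*k-(k-j)).choose (k-j)) * ((m+2*k-2*(k-j)).choose (k-(k-j)))) *
        ((-1:ℝ)^i' * ((m+2*k'-i').choose i') * ((m+2*k'-2*i').choose (k'-i'))) *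
        (1 / ((((m+2*k-2*(k-j)) + (m+2*k'-2*i') + 1 : ℕ):ℝ) + 1)))
      = ∑ j' ∈ range (k'+1),
          ((-1:ℝ)^(k'-j') * (k'.choose j') * ((m+k'+j').factorial / (m+j').factorial))
            * (1/(2 * k.factorial * k'.factorial))
            * ((-1:ℝ)^(k-j) * (k.choose j) *
              ((m+k+j).factorial / ((m+j).factorial * ((m:ℝ)+j+j'+1)))) := by
    intro j hj
    have hjle : j ≤ k := by simpa using Nat.lt_succ_iff.mp (mem_range.mp hj)
    rw [reflect_sum]
    refine sum_congr rfl fun j' hj' => ?_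
    have hj'le : j' ≤ k' := by simpa using Nat.lt_succ_iff.mp (mem_range.mp hj')
    rw [show m+2*k-(k-j) = m+k+j by omega, show m+2*k-2*(k-j) = m+2*j by omega,
      show k-(k-j) = j by omega,
      show m+2*k'-(k'-j') = m+k'+j' by omega, show m+2*k'-2*(k'-j') = m+2*j' by omega,
      show k'-(k'-j') = j' by omega]
    rw [mul_assoc ((-1:ℝ)^(k-j)), mul_assoc ((-1:ℝ)^(k'-j')),
      choose_identity m k j hjle, choose_identity m k' j' hj'le]
    have hd : ((((m+2*j) + (m+2*j') + 1 : ℕ):ℝ) + 1) = 2*((m:ℝ)+j+j'+1) := by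
      push_cast; ring
    rw [hd]
    have hk : (k.factorial : ℝ) ≠ 0 := by exact_mod_cast k.factorial_ne_zero
    have hk' : (k'.factorial : ℝ) ≠ 0 := by exact_mod_cast k'.factorial_ne_zero
    have hmj : ((m+j).factorial : ℝ) ≠ 0 := by exact_mod_cast (m+j).factorial_ne_zero
    have hmj' : ((m+j').factorial : ℝ) ≠ 0 := by exact_mod_cast (m+j').factorial_ne_zero
    have hden : ((m:ℝ)+j+j'+1) ≠ 0 := by positivity
    field_simp
  rw [sum_congr rfl hstep, Finset.sum_comm]
  have hinner : ∀ j' ∈ range (k'+1),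
      (∑ j ∈ range (k+1),
          ((-1:ℝ)^(k'-j') * (k'.choose j') * ((m+k'+j').factorial / (m+j').factorial))
            * (1/(2 * k.factorial * k'.factorial))
            * ((-1:ℝ)^(k-j) * (k.choose j) *
              ((m+k+j).factorial / ((m+j).factorial * ((m:ℝ)+j+j'+1)))))
      = ((-1:ℝ)^(k'-j') * (k'.choose j') * ((m+k'+j').factorial / (m+j').factorial))
            * (1/(2 * k.factorial * k'.factorial))
            * (if j' = k then (k.factorial:ℝ)^2 * (m+k).factorial / (m+2*k+1).factorial
               else 0) := by
    intro j' hj'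
    have hj'le : j' ≤ k := le_trans (Nat.lt_succ_iff.mp (mem_range.mp hj')) hkk
    rw [← Finset.mul_sum, KL m k j' hj'le]
  rw [sum_congr rfl hinner]
  rcases Nat.lt_or_ge k' k with hlt | hge
  · rw [if_neg (by omega)]
    refine sum_eq_zero fun j' hj' => ?_
    rw [if_neg (by have := Nat.lt_succ_iff.mp (mem_range.mp hj'); omega), mul_zero]
  · have hkeq : k = k' := le_antisymm hge hkk
    subst hkeq
    rw [if_pos rfl]
    rw [Finset.sum_eq_single_of_mem k (by simp)]
    · rw [if_pos rfl, Nat.choose_self, Nat.sub_self]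
      have hk : (k.factorial : ℝ) ≠ 0 := by exact_mod_cast k.factorial_ne_zero
      have hmk : ((m+k).factorial : ℝ) ≠ 0 := by exact_mod_cast (m+k).factorial_ne_zero
      have hfs : ((m+2*k+1).factorial : ℝ) = ((m:ℝ)+2*k+1) * (m+2*k).factorial := by
        rw [show m+2*k+1 = (m+2*k)+1 from rfl, Nat.factorial_succ]
        push_cast; ring
      have hm2k : ((m+2*k).factorial : ℝ) ≠ 0 := by exact_mod_cast (m+2*k).factorial_ne_zero
      have hden : ((m:ℝ)+2*k+1) ≠ 0 := by positivity
      rw [show m+k+k = m+2*k by ring, hfs]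
      push_cast
      field_simp
    · intro j' hj' hne
      rw [if_neg hne, mul_zero]

lemma zernike_expand (m k k' : ℕ) (r : ℝ) :
    zernikeR m k r * zernikeR m k' r * r =
    ∑ i ∈ range (k+1), ∑ i' ∈ range (k'+1),
      ((-1:ℝ)^i * ((m+2*k-i).choose i) * ((m+2*k-2*i).choose (k-i))) *
      ((-1:ℝ)^i' * ((m+2*k'-i').choose i') * ((m+2*k'-2*i').choose (k'-i'))) *
      r ^ ((m+2*k-2*i) + (m+2*k'-2*i') + 1) := by
  rw [zernikeR, zernikeR, Finset.sum_mul_sum, Finset.sum_mul]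
  refine Finset.sum_congr rfl fun i hi => ?_
  rw [Finset.sum_mul]
  refine Finset.sum_congr rfl fun i' hi' => ?_
  rw [pow_add, pow_add, pow_one]
  ring

lemma radial_integral_le (m k k' : ℕ) (hkk : k' ≤ k) :
    ∫ r in (0:ℝ)..1, zernikeR m k r * zernikeR m k' r * r
    = if k = k' then 1/(2*((m:ℝ)+2*k+1)) else 0 := by
  simp only [zernike_expand m k k']
  rw [intervalIntegral.integral_finset_sum (fun i _ => ?_)]
  swap
  · apply Continuous.intervalIntegrable
    fun_prop
  rw [Finset.sum_congr rfl (fun i _ => intervalIntegral.integral_finset_sum (fun i' _ => ?_))]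
  swap
  · apply Continuous.intervalIntegrable
    fun_prop
  rw [← radial_sum_aux m k k' hkk]
  refine Finset.sum_congr rfl fun i _ => Finset.sum_congr rfl fun i' _ => ?_
  rw [intervalIntegral.integral_const_mul, integral_pow]
  norm_num

lemma radial_integral (m k k' : ℕ) :
    ∫ r in (0:ℝ)..1, zernikeR m k r * zernikeR m k' r * r
    = if k = k' then 1/(2*((m:ℝ)+2*k+1)) else 0 := by
  by_cases h : k' ≤ k
  · exact radial_integral_le m k k' h
  · have h2 : k ≤ k' := le_of_not_ge h
    have hs : ∀ r:ℝ, zernikeR m k r * zernikeR m k' r * r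
        = zernikeR m k' r * zernikeR m k r * r := fun r => by ring
    simp only [hs]
    rw [radial_integral_le m k' k h2, if_neg (by omega), if_neg (by omega)]

lemma theta_integral (n : ℤ) :
    ∫ θ in (0:ℝ)..(2*π), Complex.exp (Complex.I * n * θ) = if n = 0 then (2*π:ℂ) else 0 := by
  by_cases h : n = 0
  · simp [h, Complex.ofReal_mul]
  · rw [if_neg h]
    have hc : Complex.I * n ≠ 0 :=
      mul_ne_zero Complex.I_ne_zero (by exact_mod_cast h)
    have hassoc : ∀ θ:ℝ, Complex.I * (n:ℂ) * (θ:ℂ) = (Complex.I * n) * (θ:ℂ) := fun θ => rfl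
    rw [show (∫ θ in (0:ℝ)..(2*π), Complex.exp (Complex.I * n * θ)) = (Complex.exp (Complex.I * n * ((2*π:ℝ):ℂ)) - Complex.exp (Complex.I * n * ((0:ℝ):ℂ))) / (Complex.I * n) from integral_exp_mul_complex hc]
    have h1 : Complex.exp (Complex.I * n * ((2*π:ℝ):ℂ)) = 1 := by
      rw [show Complex.I * n * ((2*π:ℝ):ℂ) = (n:ℂ) * (2*(π:ℂ)*Complex.I) by push_cast; ring]
      exact Complex.exp_int_mul_two_pi_mul_I n
    rw [h1]
    norm_num

/-- The Zernike polynomials form an orthonormal family in `L²(D)` with respect to the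
polar-coordinate inner product `∫_0^1 ∫_0^{2π} ψ_{j,k} conj(ψ_{j',k'}) r dθ dr`. -/
theorem zernike_orthonormal (j j' : ℤ) (k k' : ℕ) :
    (∫ r in (0:ℝ)..1, (∫ θ in (0:ℝ)..(2 * π),
        zernikePsi j k r θ * conj (zernikePsi j' k' r θ)) * (r : ℂ)) =
      if j = j' ∧ k = k' then 1 else 0 := by
  set N : ℝ := Real.sqrt ((j.natAbs + 2 * k + 1) / π) with hN
  set N' : ℝ := Real.sqrt ((j'.natAbs + 2 * k' + 1) / π) with hN'
  have hinner : ∀ r : ℝ, (∫ θ in (0:ℝ)..(2*π), zernikePsi j k r θ * conj (zernikePsi j' k' r θ))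
      = ((N * zernikeR j.natAbs k r * (N' * zernikeR j'.natAbs k' r) : ℝ) : ℂ) *
        (if j - j' = 0 then (2*π:ℂ) else 0) := by
    intro r
    have hpt : ∀ θ : ℝ, zernikePsi j k r θ * conj (zernikePsi j' k' r θ)
        = ((N * zernikeR j.natAbs k r * (N' * zernikeR j'.natAbs k' r) : ℝ) : ℂ) *
          Complex.exp (Complex.I * ((j - j' : ℤ):ℂ) * (θ:ℂ)) := by
      intro θ
      rw [zernikePsi, zernikePsi, map_mul, map_mul, Complex.conj_ofReal, Complex.conj_ofReal,
        ← Complex.exp_conj, map_mul, map_mul, Complex.conj_I, Complex.conj_ofReal, map_intCast]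
      rw [show ((N:ℂ) * (zernikeR j.natAbs k r:ℝ) * Complex.exp (Complex.I * j * θ)) *
          ((N':ℂ) * (zernikeR j'.natAbs k' r:ℝ) * Complex.exp (-Complex.I * j' * θ))
        = ((N:ℂ) * (zernikeR j.natAbs k r:ℝ) * ((N':ℂ) * (zernikeR j'.natAbs k' r:ℝ))) *
          (Complex.exp (Complex.I * j * θ) * Complex.exp (-Complex.I * j' * θ)) from by ring]
      rw [← Complex.exp_add]
      congr 1
      · push_cast; ring
      · push_cast; ring
    simp only [hpt]
    rw [intervalIntegral.integral_const_mul, theta_integral (j - j')]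
  simp only [hinner]
  by_cases hj : j = j'
  · subst hj
    simp only [sub_self, eq_self_iff_true, if_true, true_and]
    have hpt2 : ∀ r : ℝ, ((N * zernikeR j.natAbs k r * (N' * zernikeR j.natAbs k' r) : ℝ) : ℂ) *
        (2*π:ℂ) * (r:ℂ)
        = ((2*π*(N*N') * (zernikeR j.natAbs k r * zernikeR j.natAbs k' r * r) : ℝ) : ℂ) := by
      intro r; push_cast; ring_nf
    simp only [hpt2]
    rw [intervalIntegral.integral_ofReal, intervalIntegral.integral_const_mul,
      radial_integral j.natAbs k k']
    by_cases hk : k = k'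
    · subst hk
      rw [if_pos rfl, if_pos (rfl : k = k)]
      have hval : 2 * π * (N * N') * (1 / (2 * ((j.natAbs:ℝ) + 2 * k + 1))) = 1 := by
        rw [hN, hN', Real.mul_self_sqrt (div_nonneg (by positivity) Real.pi_pos.le)]
        have h1 : ((j.natAbs:ℝ) + 2 * k + 1) ≠ 0 := by positivity
        have h2 : (π:ℝ) ≠ 0 := Real.pi_ne_zero
        field_simp
      rw [hval, Complex.ofReal_one]
    · rw [if_neg hk, if_neg hk]
      norm_num
  · have hjj : j - j' ≠ 0 := sub_ne_zero.mpr hj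
    simp only [if_neg hjj, mul_zero, zero_mul, intervalIntegral.integral_zero]
    rw [if_neg (show ¬(j = j' ∧ k = k') from fun hc => hj hc.1)]
end

section
/- For m, n ≥ 1 with n = m + j (j ≥ 0) and 0 ≤ k < m, the explicit formula holds: -∫_D ψ_{j,k} ∇u_m · conj(∇u_n) dx = -(1/√π) · √(j+2k+1)/(m+j+k) · ∏_{i=1}^{k} (m-i)/(j+m+k-i), where u_m(r,θ) = (1/(√(2π) m)) r^m e^{imθ}. -/
open Real Complex MeasureTheory ComplexConjugate

/-- The grounded harmonic extension `u_m(r,θ) = (1/(√(2π)|m|)) r^{|m|} e^{imθ}`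
of the Fourier Neumann datum `f_m`, in polar coordinates. -/
noncomputable def upol (m : ℤ) (r θ : ℝ) : ℂ :=
  (1 / ((Real.sqrt (2 * π) : ℝ) * (m.natAbs : ℝ)) : ℝ) * (r : ℂ) ^ (m.natAbs) *
    Complex.exp (Complex.I * m * θ)

/-- `∇u_m ⋅ conj(∇u_n)` in polar coordinates:
`∂_r u_m conj(∂_r u_n) + (1/r²) ∂_θ u_m conj(∂_θ u_n)`. -/
noncomputable def gradDotPolar (m n : ℤ) (r θ : ℝ) : ℂ :=
  deriv (fun s : ℝ => upol m s θ) r * conj (deriv (fun s : ℝ => upol n s θ) r) +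
    (1 / (r : ℂ) ^ 2) * deriv (fun t : ℝ => upol m r t) θ *
      conj (deriv (fun t : ℝ => upol n r t) θ)

/-- The `(m,n)` matrix element `a_{m,n}(η) = -∫_D η ∇u_m ⋅ conj(∇u_n) dx` of the
linearized forward map, written as a polar double integral. -/
noncomputable def amat (m n : ℤ) (η : ℝ → ℝ → ℂ) : ℂ :=
  -∫ r in (0:ℝ)..1, (∫ θ in (0:ℝ)..(2 * π), η r θ * gradDotPolar m n r θ) * (r : ℂ)

lemma prodfac (a : ℕ) (k : ℕ) : a.factorial * ∏ t ∈ Finset.Icc 1 k, (a + t) = (a + k).factorial := by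
  induction k with
  | zero => simp
  | succ k ih =>
    rw [Finset.prod_Icc_succ_top (by omega), ← mul_assoc, ih]
    rw [show a + (k+1) = (a+k)+1 by ring, Nat.factorial_succ]; ring

lemma prodA (i : ℕ) : ∏ l ∈ Finset.range i, ((i:ℝ) - l) = i.factorial := by
  have : ∀ l ∈ Finset.range i, ((i:ℝ) - l) = ((i - l : ℕ) : ℝ) := by
    intro l hl; rw [Finset.mem_range] at hl; push_cast [Nat.cast_sub hl.le]; ring
  rw [Finset.prod_congr rfl this, ← Nat.cast_prod]
  norm_cast
  rw [← Finset.prod_range_reflect (fun l => i - l) i]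
  have : ∀ l ∈ Finset.range i, i - (i - 1 - l) = l + 1 := by
    intro l hl; rw [Finset.mem_range] at hl; omega
  rw [Finset.prod_congr rfl this, Finset.prod_range_add_one_eq_factorial]

lemma prodB (i : ℕ) : ∀ k : ℕ, i ≤ k →
    ∏ l ∈ Finset.Icc (i+1) k, ((i:ℝ) - l) = (-1)^(k-i) * (k-i).factorial := by
  intro k
  induction k with
  | zero => intro h; interval_cases i; simp
  | succ k ih =>
    intro h
    rcases Nat.eq_or_lt_of_le h with h1 | h1
    · subst h1; simp
    · have hik : i ≤ k := by omega
      rw [Finset.prod_Icc_succ_top (by omega), ih hik]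
      have h2 : k + 1 - i = (k - i) + 1 := by omega
      rw [h2, pow_succ, Nat.factorial_succ]
      have : ((i:ℝ) - (k+1:ℕ)) = -(((k-i:ℕ):ℝ) + 1) := by push_cast [Nat.cast_sub hik]; ring
      rw [this]; push_cast; ring

lemma eraseRange (i k : ℕ) (h : i ≤ k) :
    (Finset.range (k+1)).erase i = Finset.range i ∪ Finset.Icc (i+1) k := by
  ext l; simp only [Finset.mem_erase, Finset.mem_range, Finset.mem_union, Finset.mem_Icc]; omega

lemma prodErase (i k : ℕ) (h : i ≤ k) :
    ∏ l ∈ (Finset.range (k+1)).erase i, ((i:ℝ) - l) = (-1)^(k-i) * (i.factorial * (k-i).factorial) := by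
  rw [eraseRange i k h, Finset.prod_union (by
    rw [Finset.disjoint_left]; intro a ha hb
    simp only [Finset.mem_range] at ha; simp only [Finset.mem_Icc] at hb; omega)]
  rw [prodA, prodB i k h]; ring

lemma nodeNat (j k i : ℕ) (h : i ≤ k) :
    Nat.choose (j + 2*k - i) i * Nat.choose (j + 2*k - 2*i) (k - i) * (i.factorial * (k-i).factorial)
      = ∏ t ∈ Finset.Icc 1 k, (j + k + t - i) := by
  have h1 : Nat.choose (j + 2*k - i) i * i.factorial * (j + 2*k - 2*i).factorial
      = (j + 2*k - i).factorial := by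
    have := Nat.choose_mul_factorial_mul_factorial (show i ≤ j + 2*k - i by omega)
    rw [show j + 2*k - i - i = j + 2*k - 2*i by omega] at this; exact this
  have h2 : Nat.choose (j + 2*k - 2*i) (k - i) * (k-i).factorial * (j + k - i).factorial
      = (j + 2*k - 2*i).factorial := by
    have := Nat.choose_mul_factorial_mul_factorial (show k - i ≤ j + 2*k - 2*i by omega)
    rw [show j + 2*k - 2*i - (k - i) = j + k - i by omega] at this; exact this
  have h3 : (∏ t ∈ Finset.Icc 1 k, (j + k + t - i)) * (j+k-i).factorial
      = (j + 2*k - i).factorial := by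
    have := prodfac (j + k - i) k
    rw [show (j+k-i) + k = j + 2*k - i by omega] at this
    rw [← this, Finset.prod_congr rfl (fun t ht => by
      rw [Finset.mem_Icc] at ht; omega : ∀ t ∈ Finset.Icc 1 k, j + k + t - i = (j + k - i) + t)]
    ring
  have hpos : 0 < (j+k-i).factorial := Nat.factorial_pos _
  have hmain : (Nat.choose (j + 2*k - i) i * Nat.choose (j + 2*k - 2*i) (k - i) *
      (i.factorial * (k-i).factorial)) * (j+k-i).factorial
      = (∏ t ∈ Finset.Icc 1 k, (j + k + t - i)) * (j+k-i).factorial := by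
    rw [h3]
    calc _ = (Nat.choose (j + 2*k - i) i * i.factorial) *
        (Nat.choose (j + 2*k - 2*i) (k - i) * (k-i).factorial * (j+k-i).factorial) := by ring
    _ = _ := by rw [h2, ← h1]
  exact Nat.eq_of_mul_eq_mul_right hpos hmain

lemma lagrange_expand (k : ℕ) (Q : Polynomial ℝ) (hdeg : Q.degree < ((Finset.range (k+1)).card : ℕ)) (x : ℝ) :
    Q.eval x = ∑ i ∈ Finset.range (k+1),
      Q.eval (i:ℝ) * ∏ l ∈ (Finset.range (k+1)).erase i, (((i:ℝ) - l)⁻¹ * (x - l)) := by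
  classical
  have hinj : Set.InjOn (fun l : ℕ => (l:ℝ)) (Finset.range (k+1)) :=
    fun a _ b _ h => Nat.cast_injective h
  have hL := Lagrange.eq_interpolate (v := fun l : ℕ => (l:ℝ)) hinj hdeg
  conv_lhs => rw [hL]
  rw [Lagrange.interpolate_apply, Polynomial.eval_finset_sum]
  refine Finset.sum_congr rfl fun i hi => ?_
  rw [Polynomial.eval_mul, Polynomial.eval_C]
  refine congrArg _ ?_
  rw [Lagrange.basis, Polynomial.eval_prod]
  refine Finset.prod_congr rfl fun l hl => ?_
  show Polynomial.eval x (Lagrange.basisDivisor ((i:ℕ):ℝ) ((l:ℕ):ℝ)) = _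
  rw [Lagrange.basisDivisor]
  simp

lemma key (j k m : ℕ) (hk : k < m) :
    ∑ i ∈ Finset.range (k+1),
      ((-1:ℝ)^i * ((j+2*k-i).choose i) * ((j+2*k-2*i).choose (k-i))) / ((j:ℝ)+k+m-i)
    = (1/((m:ℝ)+j+k)) * ∏ i ∈ Finset.Icc 1 k, ((m:ℝ)-i)/((j:ℝ)+m+k-i) := by
  classical
  set x : ℝ := (j:ℝ)+k+m with hx
  set Q : Polynomial ℝ := ∏ t ∈ Finset.Icc 1 k, (Polynomial.X - Polynomial.C ((j:ℝ)+k+t)) with hQ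
  set P : ℝ := ∏ l ∈ Finset.range (k+1), (x - l) with hP
  have hQdeg : Q.degree < ((Finset.range (k+1)).card : ℕ) := by
    rw [Finset.card_range, hQ, Polynomial.degree_prod]
    simp only [Polynomial.degree_X_sub_C]
    rw [Finset.sum_const, Nat.card_Icc]
    simp only [Nat.add_sub_cancel, nsmul_eq_mul, mul_one]
    exact_mod_cast Nat.lt_succ_self k
  have hEval := lagrange_expand k Q hQdeg x
  have hxl : ∀ l : ℕ, l ∈ Finset.range (k+1) → x - (l:ℝ) ≠ 0 := by
    intro l hl; rw [Finset.mem_range] at hl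
    have h1 : (l:ℝ) < (j:ℝ)+k+m := by
      have h2 : l < j + k + m := by omega
      exact_mod_cast h2
    rw [hx]; exact sub_ne_zero.mpr (by linarith)
  have hnode : ∀ i ∈ Finset.range (k+1), Q.eval (i:ℝ) =
      ((-1:ℝ)^i * ((j+2*k-i).choose i) * ((j+2*k-2*i).choose (k-i))) *
        ∏ l ∈ (Finset.range (k+1)).erase i, ((i:ℝ) - l) := by
    intro i hi
    have hik : i ≤ k := by rw [Finset.mem_range] at hi; omega
    rw [prodErase i k hik, hQ, Polynomial.eval_prod]
    have h1 : ∀ t ∈ Finset.Icc 1 k, Polynomial.eval (i:ℝ) (Polynomial.X - Polynomial.C ((j:ℝ)+k+t))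
        = (-1) * (((j+k+t-i : ℕ)) : ℝ) := by
      intro t ht; rw [Finset.mem_Icc] at ht
      simp only [Polynomial.eval_sub, Polynomial.eval_X, Polynomial.eval_C]
      rw [Nat.cast_sub (by omega : i ≤ j+k+t)]; push_cast; ring
    rw [Finset.prod_congr rfl h1, Finset.prod_mul_distrib, Finset.prod_const, Nat.card_Icc,
      Nat.add_sub_cancel, ← Nat.cast_prod, ← nodeNat j k i hik]
    have hs : (-1:ℝ)^i * (-1)^(k-i) = (-1)^k := by rw [← pow_add]; congr 1; omega
    push_cast
    rw [← hs]; ring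
  have hterm : ∀ i ∈ Finset.range (k+1),
      ((-1:ℝ)^i * ((j+2*k-i).choose i) * ((j+2*k-2*i).choose (k-i))) / ((j:ℝ)+k+m-i)
      = Q.eval (i:ℝ) * (∏ l ∈ (Finset.range (k+1)).erase i, (((i:ℝ) - l)⁻¹ * (x - l))) / P := by
    intro i hi
    have hik : i ≤ k := by rw [Finset.mem_range] at hi; omega
    have hPi : P = (x - i) * ∏ l ∈ (Finset.range (k+1)).erase i, (x - l) :=
      (Finset.mul_prod_erase _ _ hi).symm
    have hA : (∏ l ∈ (Finset.range (k+1)).erase i, ((i:ℝ) - l)) ≠ 0 := by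
      refine Finset.prod_ne_zero_iff.mpr fun l hl => ?_
      rw [Finset.mem_erase] at hl
      have : (i:ℝ) ≠ (l:ℝ) := by exact_mod_cast hl.1.symm
      exact sub_ne_zero.mpr this
    have hB : (∏ l ∈ (Finset.range (k+1)).erase i, (x - (l:ℝ))) ≠ 0 :=
      Finset.prod_ne_zero_iff.mpr fun l hl => hxl l (Finset.mem_of_mem_erase hl)
    have hxi : x - (i:ℝ) ≠ 0 := hxl i hi
    have hd : ((j:ℝ)+k+m-i) = x - i := by rw [hx]
    rw [hd, hnode i hi, hPi, Finset.prod_mul_distrib, Finset.prod_inv_distrib]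
    field_simp
    try ring
  have hsum : ∑ i ∈ Finset.range (k+1),
      ((-1:ℝ)^i * ((j+2*k-i).choose i) * ((j+2*k-2*i).choose (k-i))) / ((j:ℝ)+k+m-i)
      = Q.eval x / P := by
    rw [Finset.sum_congr rfl hterm, ← Finset.sum_div, ← hEval]
  rw [hsum]
  -- now compute Q.eval x and P
  have hQx : Q.eval x = ∏ t ∈ Finset.Icc 1 k, ((m:ℝ) - t) := by
    rw [hQ, Polynomial.eval_prod]
    refine Finset.prod_congr rfl fun t ht => ?_
    simp only [Polynomial.eval_sub, Polynomial.eval_X, Polynomial.eval_C]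
    rw [hx]; ring
  have hPx : P = x * ∏ t ∈ Finset.Icc 1 k, ((j:ℝ)+m+k-t) := by
    have h0 : (0:ℕ) ∈ Finset.range (k+1) := Finset.mem_range.mpr (Nat.succ_pos k)
    have he : (Finset.range (k+1)).erase 0 = Finset.Icc 1 k := by
      rw [eraseRange 0 k (Nat.zero_le k)]; simp
    rw [hP, ← Finset.mul_prod_erase _ _ h0, he, Nat.cast_zero, sub_zero]
    refine congrArg _ (Finset.prod_congr rfl fun t ht => ?_)
    rw [hx]; ring
  rw [hQx, hPx, Finset.prod_div_distrib]
  have hxm : (m:ℝ)+j+k = x := by rw [hx]; ring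
  rw [hxm]
  simp only [div_eq_mul_inv, mul_inv, one_mul]
  ring


lemma hasDerivAt_upol_r (M : ℕ) (θ r : ℝ) :
    HasDerivAt (fun s : ℝ => upol (M:ℤ) s θ)
      (((1 / (Real.sqrt (2 * π) * (M:ℝ)) : ℝ) : ℂ) * ((M:ℂ) * (r:ℂ)^(M-1)) *
        Complex.exp (Complex.I * M * θ)) r := by
  have h1 : HasDerivAt (fun s : ℝ => ((s:ℂ))^M) ((M:ℂ) * (r:ℂ)^(M-1)) r :=
    (hasDerivAt_pow M (r:ℂ)).comp_ofReal
  have h2 := (h1.const_mul (((1 / (Real.sqrt (2 * π) * (M:ℝ)) : ℝ) : ℂ))).mul_const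
    (Complex.exp (Complex.I * M * θ))
  have hfun : (fun s : ℝ => upol (M:ℤ) s θ)
      = fun s : ℝ => (((1 / (Real.sqrt (2 * π) * (M:ℝ)) : ℝ) : ℂ) * ((s:ℂ))^M *
        Complex.exp (Complex.I * M * θ)) := by
    funext s; simp [upol]
  rw [hfun]
  exact h2

lemma hasDerivAt_upol_t (M : ℕ) (r θ : ℝ) :
    HasDerivAt (fun t : ℝ => upol (M:ℤ) r t)
      (((1 / (Real.sqrt (2 * π) * (M:ℝ)) : ℝ) : ℂ) * (r:ℂ)^M *
        (Complex.exp (Complex.I * M * θ) * (Complex.I * M))) θ := by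
  have h0 : HasDerivAt (fun z : ℂ => Complex.exp (Complex.I * M * z))
      (Complex.exp (Complex.I * M * (θ:ℂ)) * (Complex.I * M)) (θ:ℂ) := by
    have := ((hasDerivAt_id (θ:ℂ)).const_mul (Complex.I * (M:ℂ))).cexp
    simpa [mul_comm] using this
  have h1 : HasDerivAt (fun t : ℝ => Complex.exp (Complex.I * M * t))
      (Complex.exp (Complex.I * M * (θ:ℂ)) * (Complex.I * M)) θ := h0.comp_ofReal
  have h2 := h1.const_mul (((1 / (Real.sqrt (2 * π) * (M:ℝ)) : ℝ) : ℂ) * (r:ℂ)^M)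
  have hfun : (fun t : ℝ => upol (M:ℤ) r t)
      = fun t : ℝ => ((((1 / (Real.sqrt (2 * π) * (M:ℝ)) : ℝ) : ℂ) * (r:ℂ)^M) *
        Complex.exp (Complex.I * M * t)) := by
    funext t; simp [upol]
  rw [hfun]
  exact h2

lemma conj_exp_I (N : ℕ) (θ : ℝ) :
    conj (Complex.exp (Complex.I * N * θ)) = Complex.exp (-(Complex.I * N * θ)) := by
  rw [← Complex.exp_conj]
  congr 1
  simp only [map_mul, Complex.conj_I, Complex.conj_ofReal, map_natCast]
  ring

lemma grad_eq (M N : ℕ) (hM : 1 ≤ M) (hN : 1 ≤ N) (r θ : ℝ) (hr : r ≠ 0) :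
    gradDotPolar (M:ℤ) (N:ℤ) r θ = ((1/π : ℝ) : ℂ) * (r:ℂ)^(M+N-2) *
      (Complex.exp (Complex.I * M * θ) * Complex.exp (-(Complex.I * N * θ))) := by
  obtain ⟨a, rfl⟩ : ∃ a, M = a + 1 := ⟨M - 1, by omega⟩
  obtain ⟨b, rfl⟩ : ∃ b, N = b + 1 := ⟨N - 1, by omega⟩
  rw [gradDotPolar, (hasDerivAt_upol_r (a+1) θ r).deriv, (hasDerivAt_upol_r (b+1) θ r).deriv,
    (hasDerivAt_upol_t (a+1) r θ).deriv, (hasDerivAt_upol_t (b+1) r θ).deriv]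
  simp only [map_mul, Complex.conj_ofReal, map_natCast, conj_exp_I, Complex.conj_I,
    Nat.add_sub_cancel, map_pow]
  have hpi : Real.sqrt (2*π) ≠ 0 := by
    refine Real.sqrt_ne_zero'.mpr (by positivity)
  have hpi2 : (Real.sqrt (2*π) : ℂ) ≠ 0 := by exact_mod_cast hpi
  have hpi3 : Real.sqrt (2*π) * Real.sqrt (2*π) = 2*π := Real.mul_self_sqrt (by positivity)
  have hpin : (π:ℂ) ≠ 0 := by exact_mod_cast Real.pi_ne_zero
  have ha : ((a:ℂ)+1) ≠ 0 := by exact_mod_cast Nat.cast_add_one_ne_zero (R := ℂ) a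
  have hb : ((b:ℂ)+1) ≠ 0 := by exact_mod_cast Nat.cast_add_one_ne_zero (R := ℂ) b
  have hrc : (r:ℂ) ≠ 0 := by exact_mod_cast hr
  have he : a + 1 + (b + 1) - 2 = a + b := by omega
  rw [he]
  have hconst : ∀ c : ℕ, ((1 / (Real.sqrt (2*π) * ((c:ℕ):ℝ)) : ℝ) : ℂ)
      = 1/(((Real.sqrt (2*π):ℝ):ℂ) * ((c:ℕ):ℂ)) := by
    intro c; push_cast; ring
  rw [hconst (a+1), hconst (b+1)]
  have h2sq : ((Real.sqrt 2:ℝ):ℂ)^2 = 2 := by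
    rw [← Complex.ofReal_pow, Real.sq_sqrt (by norm_num : (0:ℝ) ≤ 2)]; norm_num
  have hpisq : ((Real.sqrt π:ℝ):ℂ)^2 = (π:ℂ) := by
    rw [← Complex.ofReal_pow, Real.sq_sqrt Real.pi_pos.le]
  have h2z : ((Real.sqrt 2:ℝ):ℂ) ≠ 0 := by
    simpa using Real.sqrt_ne_zero'.mpr (by norm_num : (0:ℝ) < 2)
  have hpz : ((Real.sqrt π:ℝ):ℂ) ≠ 0 := by
    simpa using Real.sqrt_ne_zero'.mpr Real.pi_pos
  push_cast
  field_simp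
  have hD1 : (((Real.sqrt 2:ℝ):ℂ) * ((Real.sqrt π:ℝ):ℂ) * ((a:ℂ)+1) *
      (((Real.sqrt 2:ℝ):ℂ) * ((Real.sqrt π:ℝ):ℂ) * ((b:ℂ)+1))) ≠ 0 :=
    mul_ne_zero (mul_ne_zero (mul_ne_zero h2z hpz) ha) (mul_ne_zero (mul_ne_zero h2z hpz) hb)
  have hD2 : ((r:ℂ)^2 * (((Real.sqrt 2:ℝ):ℂ) * ((Real.sqrt π:ℝ):ℂ) * ((a:ℂ)+1)) *
      (((Real.sqrt 2:ℝ):ℂ) * ((Real.sqrt π:ℝ):ℂ) * ((b:ℂ)+1))) ≠ 0 :=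
    mul_ne_zero (mul_ne_zero (pow_ne_zero 2 hrc) (mul_ne_zero (mul_ne_zero h2z hpz) ha))
      (mul_ne_zero (mul_ne_zero h2z hpz) hb)
  have hs : ((Real.sqrt (2*π):ℝ):ℂ)^2 = 2*(π:ℂ) := by
    rw [← Complex.ofReal_pow, Real.sq_sqrt (by positivity)]; push_cast; ring
  rw [hs, Complex.I_sq]
  ring

lemma integrand_eq (j k M : ℕ) (hM : 1 ≤ M) (r θ : ℝ) (hr : r ≠ 0) :
    zernikePsi (j:ℤ) k r θ * gradDotPolar (M:ℤ) ((M:ℤ)+(j:ℤ)) r θ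
    = ((Real.sqrt (((j:ℝ) + 2*k + 1)/π) * zernikeR j k r * (1/π) * r^(2*M+j-2) : ℝ) : ℂ) := by
  have hMj : (M:ℤ)+(j:ℤ) = ((M+j:ℕ):ℤ) := by push_cast; ring
  rw [hMj, grad_eq M (M+j) hM (by omega) r θ hr]
  rw [zernikePsi]
  have hna : ((j:ℤ)).natAbs = j := Int.natAbs_natCast j
  rw [hna]
  have hexp : Complex.exp (Complex.I * (j:ℤ) * θ) *
      (Complex.exp (Complex.I * M * θ) * Complex.exp (-(Complex.I * (M+j:ℕ) * θ))) = 1 := by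
    rw [← Complex.exp_add, ← Complex.exp_add, ← Complex.exp_zero]
    congr 1
    push_cast
    ring
  have he2 : M + (M+j) - 2 = 2*M+j-2 := by omega
  rw [he2]
  push_cast
  have hexp2 : Complex.exp (Complex.I * (j:ℕ) * (θ:ℂ)) * (Complex.exp (Complex.I * (M:ℕ) * (θ:ℂ)) *
      Complex.exp (-(Complex.I * ((M:ℂ) + (j:ℂ)) * (θ:ℂ)))) = 1 := by
    rw [← Complex.exp_add, ← Complex.exp_add, ← Complex.exp_zero]
    congr 1
    ring
  linear_combination (((Real.sqrt (((j:ℝ) + 2*(k:ℝ) + 1)/π) : ℝ):ℂ) * ((zernikeR j k r : ℝ):ℂ) *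
    (1/(π:ℂ)) * ((r:ℂ))^(2*M+j-2)) * hexp2

lemma inner_int (j k M : ℕ) (hM : 1 ≤ M) (r : ℝ) (hr : r ≠ 0) :
    ∫ θ in (0:ℝ)..(2*π), zernikePsi (j:ℤ) k r θ * gradDotPolar (M:ℤ) ((M:ℤ)+(j:ℤ)) r θ
    = ((2*π : ℝ):ℂ) * ((Real.sqrt (((j:ℝ)+2*k+1)/π) * zernikeR j k r * (1/π) * r^(2*M+j-2) : ℝ):ℂ) := by
  rw [intervalIntegral.integral_congr
    (g := fun _ : ℝ => ((Real.sqrt (((j:ℝ)+2*k+1)/π) * zernikeR j k r * (1/π) * r^(2*M+j-2) : ℝ):ℂ))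
    (fun θ _ => integrand_eq j k M hM r θ hr)]
  rw [intervalIntegral.integral_const, sub_zero, Complex.real_smul]

lemma radial_int (j k m : ℕ) (hm : 1 ≤ m) (hk : k < m) :
    (∫ r in (0:ℝ)..1, (2 * Real.sqrt (((j:ℝ)+2*k+1)/π) * zernikeR j k r * r^(2*m+j-1)))
    = Real.sqrt (((j:ℝ)+2*k+1)/π) * ∑ i ∈ Finset.range (k+1),
        ((-1:ℝ)^i * ((j+2*k-i).choose i) * ((j+2*k-2*i).choose (k-i))) / ((j:ℝ)+k+m-i) := by
  have h1 : ∀ r : ℝ, 2 * Real.sqrt (((j:ℝ)+2*k+1)/π) * zernikeR j k r * r^(2*m+j-1)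
      = (2 * Real.sqrt (((j:ℝ)+2*k+1)/π)) * ∑ i ∈ Finset.range (k+1),
        ((-1:ℝ)^i * ((j+2*k-i).choose i) * ((j+2*k-2*i).choose (k-i))) * r^((j+2*k-2*i)+(2*m+j-1)) := by
    intro r
    simp only [zernikeR, Finset.mul_sum, Finset.sum_mul]
    exact Finset.sum_congr rfl fun i hi => by rw [pow_add]; ring
  simp only [h1]
  rw [intervalIntegral.integral_const_mul,
    intervalIntegral.integral_finset_sum
      (fun i _ => ((by fun_prop : Continuous fun r : ℝ => ((-1:ℝ)^i * ((j+2*k-i).choose i) *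
        ((j+2*k-2*i).choose (k-i))) * r^((j+2*k-2*i)+(2*m+j-1))).intervalIntegrable _ _))]
  have h2 : ∀ i ∈ Finset.range (k+1),
      (∫ r in (0:ℝ)..1, ((-1:ℝ)^i * ((j+2*k-i).choose i) * ((j+2*k-2*i).choose (k-i))) *
        r^((j+2*k-2*i)+(2*m+j-1)))
      = ((-1:ℝ)^i * ((j+2*k-i).choose i) * ((j+2*k-2*i).choose (k-i))) *
          (1/(2*((j:ℝ)+k+m-i))) := by
    intro i hi
    rw [Finset.mem_range] at hi
    rw [intervalIntegral.integral_const_mul, integral_pow]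
    have hq : ((j+2*k-2*i)+(2*m+j-1) + 1 : ℕ) = 2*(j+k+m-i) := by omega
    have hcast : (((j+2*k-2*i)+(2*m+j-1) : ℕ):ℝ) + 1 = 2*((j:ℝ)+k+m-i) := by
      rw [← Nat.cast_one (R := ℝ), ← Nat.cast_add, hq]
      push_cast [Nat.cast_sub (by omega : i ≤ j+k+m)]
      ring
    rw [hcast]
    norm_num
  rw [Finset.sum_congr rfl h2, Finset.mul_sum, Finset.mul_sum]
  exact Finset.sum_congr rfl fun i hi => by
    rw [← one_div_mul_one_div]
    ring



/-- The explicit formula for the matrix elements: for `m ≥ 1`, `j ≥ 0`, `n = m + j` and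
`0 ≤ k < m`,
`-∫_D ψ_{j,k} ∇u_m ⋅ conj(∇u_n) dx
  = -(1/√π) √(j+2k+1)/(m+j+k) ∏_{i=1}^k (m-i)/(j+m+k-i)`. -/
theorem amat_explicit (j k m : ℕ) (hm : 1 ≤ m) (hk : k < m) :
    amat (m : ℤ) ((m : ℤ) + (j : ℤ)) (zernikePsi (j : ℤ) k) =
      ((-(1 / Real.sqrt π) * Real.sqrt ((j : ℝ) + 2 * k + 1) / ((m : ℝ) + j + k) *
          ∏ i ∈ Finset.Icc 1 k, ((m : ℝ) - i) / ((j : ℝ) + m + k - i) : ℝ) : ℂ) := by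
  have hmain : (∫ r in (0:ℝ)..1, (∫ θ in (0:ℝ)..(2*π),
        zernikePsi (j:ℤ) k r θ * gradDotPolar (m:ℤ) ((m:ℤ)+(j:ℤ)) r θ) * (r:ℂ))
      = ∫ r in (0:ℝ)..1,
          ((2 * Real.sqrt (((j:ℝ)+2*k+1)/π) * zernikeR j k r * r^(2*m+j-1) : ℝ) : ℂ) := by
    apply intervalIntegral.integral_congr_ae
    filter_upwards with r hr
    rw [Set.mem_uIoc] at hr
    have hr0 : 0 < r := by rcases hr with h | h <;> [exact h.1; linarith [h.1, h.2]]
    rw [inner_int j k m hm r (ne_of_gt hr0)]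
    have hre : (2*π) * (Real.sqrt (((j:ℝ)+2*k+1)/π) * zernikeR j k r * (1/π) * r^(2*m+j-2)) * r
        = 2 * Real.sqrt (((j:ℝ)+2*k+1)/π) * zernikeR j k r * r^(2*m+j-1) := by
      have hpow : r^(2*m+j-1) = r^(2*m+j-2) * r := by rw [← pow_succ]; congr 1; omega
      rw [hpow]
      field_simp
      try ring
    calc ((2*π : ℝ):ℂ) * ((Real.sqrt (((j:ℝ)+2*k+1)/π) * zernikeR j k r * (1/π) * r^(2*m+j-2) : ℝ):ℂ) * (r:ℂ)
        = (((2*π) * (Real.sqrt (((j:ℝ)+2*k+1)/π) * zernikeR j k r * (1/π) * r^(2*m+j-2)) * r : ℝ) : ℂ) := by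
          push_cast; ring
      _ = _ := by rw [hre]
  rw [show amat (m : ℤ) ((m : ℤ) + (j : ℤ)) (zernikePsi (j : ℤ) k)
      = -∫ r in (0:ℝ)..1, (∫ θ in (0:ℝ)..(2*π),
        zernikePsi (j:ℤ) k r θ * gradDotPolar (m:ℤ) ((m:ℤ)+(j:ℤ)) r θ) * (r:ℂ) from rfl]
  rw [hmain, intervalIntegral.integral_ofReal, radial_int j k m hm hk, key j k m hk]
  rw [← Complex.ofReal_neg]
  congr 1
  rw [Real.sqrt_div (by positivity : (0:ℝ) ≤ (j:ℝ)+2*k+1) π]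
  ring
end
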